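/- Let ψ: ℕ → [0,1/2) be a function such that q·ψ(q) is non-increasing and tends to zero as q → ∞, and assume that the limit λ := lim_{q→∞} (−log ψ(q))/(log q) exists (as a finite real number). For x₁ ∈ Exact(1,ψ), let W(x₁,1,ψ) := {x₂ ∈ [0,1] : (x₁,x₂) ∈ Exact(2,ψ)}. Then for every x₁ ∈ Exact(1,ψ), the Hausdorff dimension of W(x₁,1,ψ) is at least 1/(λ+1). -/

import Mathlib

open Set Filter MeasureTheory
open scoped NNReal ENNReal

/-- Distance from `x` to the nearest integer. -/
noncomputable def nint (x : ℝ) : ℝ := ⨅ m : ℤ, |x - (m : ℝ)|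

/-- The `ψ`-simultaneously-well approximable set `W(n, ψ)`. -/
def Wset (n : ℕ) (ψ : ℕ → ℝ) : Set (Fin n → ℝ) :=
  {x | (∀ i, x i ∈ Set.Icc (0 : ℝ) 1) ∧
    {q : ℕ | ∀ i, nint (q * x i) < ψ q}.Infinite}

/-- The exact `ψ`-simultaneously-well approximable set `Exact(n, ψ)`. -/
def ExactSet (n : ℕ) (ψ : ℕ → ℝ) : Set (Fin n → ℝ) :=
  Wset n ψ \ ⋃ c ∈ Set.Ioo (0 : ℝ) 1, Wset n (fun q => c * ψ q)

lemma nint_nonneg (x : ℝ) : 0 ≤ nint x :=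
  le_ciInf fun _ => abs_nonneg _

lemma nint_le (x : ℝ) (m : ℤ) : nint x ≤ |x - (m:ℝ)| :=
  ciInf_le ⟨0, by rintro y ⟨n, rfl⟩; exact abs_nonneg _⟩ m

lemma abs_sub_le_of_step {u B : ℕ → ℝ}
    (hstep : ∀ n, |u (n+1) - u n| ≤ B n - B (n+1)) :
    ∀ k n, k ≤ n → |u n - u k| ≤ B k - B n := by
  intro k n hkn
  induction n, hkn using Nat.le_induction with
  | base => simp
  | succ n hkn ih =>
    calc |u (n+1) - u k| ≤ |u (n+1) - u n| + |u n - u k| := by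
          have := abs_sub_le (u (n+1)) (u n) (u k); linarith [abs_sub_le (u (n+1)) (u n) (u k)]
      _ ≤ (B n - B (n+1)) + (B k - B n) := add_le_add (hstep n) ih
      _ = B k - B (n+1) := by ring

lemma limUnder_spec {u B : ℕ → ℝ}
    (hB0 : ∀ n, 0 ≤ B n) (hBlim : Tendsto B atTop (nhds 0))
    (hstep : ∀ n, |u (n+1) - u n| ≤ B n - B (n+1)) :
    Tendsto u atTop (nhds (limUnder atTop u)) ∧ ∀ k, |limUnder atTop u - u k| ≤ B k := by
  have key := abs_sub_le_of_step hstep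
  have hcauchy : CauchySeq u := by
    apply cauchySeq_of_le_tendsto_0 (fun N => 2 * B N)
    · intro n m N hn hm
      have h1 := key N n hn
      have h2 := key N m hm
      have := hB0 n; have := hB0 m
      rw [Real.dist_eq]
      have : |u n - u m| ≤ |u n - u N| + |u m - u N| := by
        have := abs_sub_le (u n) (u N) (u m)
        have := abs_sub_comm (u N) (u m)
        calc |u n - u m| ≤ |u n - u N| + |u N - u m| := abs_sub_le _ _ _
          _ = |u n - u N| + |u m - u N| := by rw [abs_sub_comm (u N) (u m)]
      linarith
    · simpa using hBlim.const_mul 2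
  have htend := hcauchy.tendsto_limUnder
  refine ⟨htend, fun k => ?_⟩
  have h1 : Tendsto (fun n => |u n - u k|) atTop (nhds |limUnder atTop u - u k|) :=
    ((htend.sub tendsto_const_nhds).abs)
  refine le_of_tendsto h1 ?_
  filter_upwards [eventually_ge_atTop k] with n hn
  exact (key k n hn).trans (by linarith [hB0 n])

/-- Nested centers determined by a digit sequence. -/
noncomputable def centerSeq (q : ℕ → ℕ) (ρ : ℕ → ℝ) (a : ℕ → ℕ) : ℕ → ℝ
  | 0 => 1/2
  | k+1 => ((⌈(q (k+1) : ℝ) * (centerSeq q ρ a k - ρ k / 2)⌉ : ℝ) + (a k : ℝ)) / (q (k+1) : ℝ)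

/-- Remainders in the generalized base expansion. -/
noncomputable def remSeq (M : ℕ → ℕ) (y : ℝ) : ℕ → ℝ
  | 0 => y
  | k+1 => remSeq M y k * M (k+1) - ⌊remSeq M y k * M (k+1)⌋₊

lemma digits_exist (M : ℕ → ℕ) (w : ℕ → ℝ) (y : ℝ)
    (hM : ∀ k, 1 ≤ M (k+1)) (hw0 : w 0 = 1)
    (hwrec : ∀ k, (M (k+1) : ℝ) * w (k+1) = w k)
    (hy : y ∈ Ico (0:ℝ) 1) :
    ∃ a : ℕ → ℕ, (∀ k, a k < M (k+1)) ∧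
      ∀ k, |y - ∑ j ∈ Finset.range k, (a j : ℝ) * w (j+1)| ≤ w k := by
  set a : ℕ → ℕ := fun k => ⌊remSeq M y k * M (k+1)⌋₊ with ha
  have hrem : ∀ k, 0 ≤ remSeq M y k ∧ remSeq M y k < 1 := by
    intro k
    induction k with
    | zero => exact ⟨hy.1, hy.2⟩
    | succ k ih =>
      have hz : (0:ℝ) ≤ remSeq M y k * M (k+1) := mul_nonneg ih.1 (Nat.cast_nonneg _)
      constructor
      · simp only [remSeq]
        have := Nat.floor_le hz
        linarith
      · simp only [remSeq]
        have := Nat.lt_floor_add_one (remSeq M y k * M (k+1))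
        linarith
  have hadm : ∀ k, a k < M (k+1) := by
    intro k
    have h1 := (hrem k).1
    have h2 := (hrem k).2
    have hMpos : (0:ℝ) < M (k+1) := by
      exact_mod_cast Nat.lt_of_lt_of_le Nat.zero_lt_one (hM k)
    rw [ha]
    have : remSeq M y k * M (k+1) < M (k+1) := by nlinarith
    exact Nat.floor_lt (by positivity) |>.2 this
  have hwpos : ∀ k, 0 ≤ w k := by
    intro k
    induction k with
    | zero => rw [hw0]; norm_num
    | succ k ih =>
      have h := hwrec k
      have hMpos : (0:ℝ) < M (k+1) := by
        exact_mod_cast Nat.lt_of_lt_of_le Nat.zero_lt_one (hM k)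
      nlinarith [hwrec k]
  have key : ∀ k, y - ∑ j ∈ Finset.range k, (a j : ℝ) * w (j+1) = remSeq M y k * w k := by
    intro k
    induction k with
    | zero => simp [remSeq, hw0]
    | succ k ih =>
      rw [Finset.sum_range_succ]
      have : remSeq M y (k+1) = remSeq M y k * M (k+1) - a k := by simp [remSeq, ha]
      rw [this]
      have hwk := hwrec k
      have : remSeq M y k * w k = remSeq M y k * (M (k+1) * w (k+1)) := by rw [hwk]
      nlinarith [hwrec k, ih]
  refine ⟨a, hadm, fun k => ?_⟩
  rw [key k, abs_of_nonneg (by nlinarith [(hrem k).1, hwpos k])]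
  nlinarith [(hrem k).1, (hrem k).2, hwpos k]

lemma exists_good_q (ψ : ℕ → ℝ) (Q : Set ℕ) (hψ : ∀ q, ψ q ∈ Set.Ico (0:ℝ) (1/2))
    (hQinf : Q.Infinite)
    (r L ε : ℝ) (hr0 : 0 < r) (hr1 : r ≤ 1) (hη : 0 < 1 - (L+1+ε)*r)
    (hlow : ∀ᶠ q : ℕ in atTop, q ∈ Q → (q:ℝ) ^ (-(L+ε)) ≤ ψ q)
    (q₀ : ℕ) (ρ w : ℝ) (hρ : 0 < ρ) (hw : 0 < w) :
    ∃ q' : ℕ, q' ∈ Q ∧ q₀ < q' ∧ ψ q' / (2*q') ≤ ρ/4 ∧ 2 ≤ ⌊(q':ℝ) * ρ / 2⌋₊ ∧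
      w ≤ 8 * ⌊(q':ℝ) * ρ / 2⌋₊ * (ψ q' / (2*q') / 2) ^ r := by
  set η := 1 - (L+1+ε)*r with hηdef
  have htend : Tendsto (fun q : ℕ => (q:ℝ)^η) atTop atTop :=
    (tendsto_rpow_atTop hη).comp tendsto_natCast_atTop_atTop
  have hev : ∀ᶠ q : ℕ in atTop,
      (4/ρ ≤ (q:ℝ)) ∧ (2*w/ρ ≤ (q:ℝ)^η) ∧ (q ∈ Q → (q:ℝ) ^ (-(L+ε)) ≤ ψ q) ∧ q₀ < q := by
    filter_upwards [tendsto_natCast_atTop_atTop.eventually_ge_atTop (4/ρ),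
      htend.eventually_ge_atTop (2*w/ρ), hlow, eventually_gt_atTop q₀] with q h1 h2 h3 h4
    exact ⟨h1, h2, h3, h4⟩
  obtain ⟨N, hN⟩ := eventually_atTop.1 hev
  obtain ⟨q', hq'Q, hq'N⟩ := hQinf.exists_gt N
  obtain ⟨h1, h2, h3, h4⟩ := hN q' hq'N.le
  have hψq := h3 hq'Q
  have hqR : (4:ℝ) ≤ (q':ℝ) * ρ := by
    rw [div_le_iff₀ hρ] at h1; linarith
  have hq'pos : (0:ℝ) < q' := by
    have : (0:ℝ) < 4/ρ := by positivity
    linarith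
  have hψpos : 0 < ψ q' := lt_of_lt_of_le (Real.rpow_pos_of_pos hq'pos _) hψq
  refine ⟨q', hq'Q, h4, ?_, ?_, ?_⟩
  · -- ψ q' / (2 q') ≤ ρ/4
    have hψhalf := (hψ q').2
    rw [div_le_div_iff₀ (by positivity) (by norm_num)]
    nlinarith
  · -- 2 ≤ ⌊q' ρ/2⌋₊
    rw [Nat.le_floor_iff (by positivity)]
    push_cast; linarith
  · -- main estimate
    have hfloor : (q':ℝ) * ρ / 4 ≤ (⌊(q':ℝ) * ρ / 2⌋₊ : ℝ) := by
      have h := Nat.sub_one_lt_floor ((q':ℝ) * ρ / 2)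
      linarith
    have hbase : (1/4 : ℝ) * (q':ℝ) ^ (-(L+ε)-1) ≤ ψ q' / (2*q') / 2 := by
      have hz : (q':ℝ) ^ (-(L+ε)-1) = (q':ℝ) ^ (-(L+ε)) / q' := by
        rw [Real.rpow_sub hq'pos, Real.rpow_one]
      have e1 : (1/4:ℝ) * ((q':ℝ)^(-(L+ε)) / q') = (q':ℝ)^(-(L+ε)) / (4*q') := by ring
      have e2 : ψ q'/(2*q')/2 = ψ q'/(4*q') := by ring
      rw [hz, e1, e2]
      gcongr
    have hB : (1/4 : ℝ) * (q':ℝ) ^ ((-(L+ε)-1)*r) ≤ ((1/4 : ℝ) * (q':ℝ) ^ (-(L+ε)-1)) ^ r := by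
      rw [Real.mul_rpow (by norm_num) (Real.rpow_pos_of_pos hq'pos _).le,
        ← Real.rpow_mul hq'pos.le]
      gcongr
      calc (1/4 : ℝ) = (1/4 : ℝ) ^ (1:ℝ) := by rw [Real.rpow_one]
        _ ≤ (1/4 : ℝ) ^ r := Real.rpow_le_rpow_of_exponent_ge (by norm_num) (by norm_num) hr1
    have hrpow_mono : ((1/4 : ℝ) * (q':ℝ) ^ (-(L+ε)-1)) ^ r ≤ (ψ q' / (2*q') / 2) ^ r :=
      Real.rpow_le_rpow (by positivity) hbase hr0.le
    have hBB := hB.trans hrpow_mono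
    have hqη : (q':ℝ)^η = (q':ℝ) * (q':ℝ) ^ ((-(L+ε)-1)*r) := by
      have he : η = 1 + (-(L+ε)-1)*r := by rw [hηdef]; ring
      rw [he, Real.rpow_add hq'pos, Real.rpow_one]
    have hcomb : (ρ/2) * (q':ℝ)^η ≤ 8 * (⌊(q':ℝ) * ρ / 2⌋₊ : ℝ) * (ψ q' / (2*q') / 2) ^ r := by
      calc (ρ/2) * (q':ℝ)^η
          = 8 * ((q':ℝ)*ρ/4) * ((1/4) * (q':ℝ)^((-(L+ε)-1)*r)) := by rw [hqη]; ring
        _ ≤ 8 * (⌊(q':ℝ)*ρ/2⌋₊ : ℝ) * ((ψ q'/(2*q')/2)^r) := by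
            gcongr
    have hfin : w ≤ (ρ/2) * (q':ℝ)^η := by
      rw [div_le_iff₀ hρ] at h2
      nlinarith [Real.rpow_pos_of_pos hq'pos η]
    linarith


set_option maxHeartbeats 2000000 in
theorem fiber_dimH_ge (ψ : ℕ → ℝ) (hψ : ∀ q, ψ q ∈ Set.Ico (0 : ℝ) (1 / 2))
    (hmono : ∀ p q : ℕ, p ≤ q → (q : ℝ) * ψ q ≤ (p : ℝ) * ψ p)
    (hzero : Tendsto (fun q : ℕ => (q : ℝ) * ψ q) atTop (nhds 0))
    (L : ℝ)
    (hL : Tendsto (fun q : ℕ => -Real.log (ψ q) / Real.log q) atTop (nhds L))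
    (x₁ : ℝ) (hx₁ : ![x₁] ∈ ExactSet 1 ψ) :
    ENNReal.ofReal (1 / (L + 1)) ≤
      dimH {x₂ : ℝ | x₂ ∈ Set.Icc (0 : ℝ) 1 ∧ ![x₁, x₂] ∈ ExactSet 2 ψ} := by
  obtain ⟨hx₁W, hx₁E⟩ := hx₁
  have hx₁Icc : x₁ ∈ Icc (0:ℝ) 1 := by simpa using hx₁W.1 0
  set Q : Set ℕ := {q : ℕ | nint (q * x₁) < ψ q} with hQdef
  have hQinf : Q.Infinite := hx₁W.2.mono fun q hq => by show nint (q * x₁) < ψ q; simpa using hq 0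
  have hψQ : ∀ q ∈ Q, 0 < ψ q := fun q hq => (nint_nonneg _).trans_lt hq
  -- L ≥ 1
  have hL1 : 1 ≤ L := by
    by_contra hcon
    push_neg at hcon
    have hev : ∀ᶠ q : ℕ in atTop, -Real.log (ψ q) / Real.log q < 1 :=
      hL.eventually_lt_const hcon
    have hev2 : ∀ᶠ q : ℕ in atTop, (q:ℝ) * ψ q < 1 :=
      hzero.eventually_lt_const (by norm_num)
    obtain ⟨N, hN⟩ := eventually_atTop.1 ((hev.and hev2).and (eventually_ge_atTop 2))
    obtain ⟨q, hqQ, hqN⟩ := hQinf.exists_gt N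
    obtain ⟨⟨h1, h2⟩, h3⟩ := hN q hqN.le
    have hq1 : (1:ℝ) < q := by exact_mod_cast h3.trans_lt' one_lt_two
    have hlogq : 0 < Real.log q := Real.log_pos hq1
    have hψpos := hψQ q hqQ
    have hψlt : ψ q < 1/(q:ℝ) := by
      rw [lt_div_iff₀ (by linarith)]; linarith [mul_comm (ψ q) (q:ℝ)]
    have hlog : Real.log (ψ q) < -Real.log q := by
      calc Real.log (ψ q) < Real.log (1/(q:ℝ)) := Real.log_lt_log hψpos hψlt
        _ = -Real.log q := by rw [one_div, Real.log_inv]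
    rw [div_lt_one hlogq] at h1
    linarith
  -- outer reduction
  refine ENNReal.le_of_forall_nnreal_lt fun r' hr'top => ?_
  rcases eq_or_ne r' 0 with rfl | hr'0
  · simp
  have hr'lt : (r':ℝ) < 1/(L+1) := by
    rw [ENNReal.lt_ofReal_iff_toReal_lt ENNReal.coe_ne_top] at hr'top
    simpa using hr'top
  have hr0 : (0:ℝ) < (r':ℝ) := by
    exact_mod_cast (pos_iff_ne_zero.2 hr'0 : 0 < r')
  set r : ℝ := (r':ℝ) with hrdef
  have hL1' : (0:ℝ) < L + 1 := by linarith
  have h1r : L + 1 < 1/r := by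
    rw [lt_div_iff₀ hr0]
    rw [lt_div_iff₀ hL1'] at hr'lt
    linarith [mul_comm r (L+1)]
  have hr1 : r ≤ 1 := by
    have : r < 1/2 := lt_of_lt_of_le hr'lt (by rw [div_le_div_iff₀ hL1' (by norm_num)]; linarith)
    linarith
  set ε : ℝ := (1/r - (L+1))/2 with hεdef
  have hεpos : 0 < ε := by rw [hεdef]; linarith
  have hη : 0 < 1 - (L+1+ε)*r := by
    have h2 : (L+1+ε) < 1/r := by rw [hεdef]; linarith
    have := mul_lt_mul_of_pos_right h2 hr0
    rw [div_mul_cancel₀ 1 hr0.ne'] at this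
    linarith
  have hLε : 1 ≤ L + ε := by linarith
  have hlow : ∀ᶠ q : ℕ in atTop, q ∈ Q → (q:ℝ) ^ (-(L+ε)) ≤ ψ q := by
    have hevLε : ∀ᶠ q : ℕ in atTop, -Real.log (ψ q) / Real.log q < L + ε :=
      hL.eventually_lt_const (by linarith)
    filter_upwards [hevLε, eventually_ge_atTop 2] with q h1 h2 hq
    have hq1 : (1:ℝ) < q := by exact_mod_cast h2.trans_lt' one_lt_two
    have hlogq : 0 < Real.log q := Real.log_pos hq1
    have hψpos := hψQ q hq
    rw [div_lt_iff₀ hlogq] at h1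
    have heq : (q:ℝ)^(-(L+ε)) = Real.exp (-(L+ε) * Real.log q) := by
      rw [Real.rpow_def_of_pos (by linarith)]; ring_nf
    rw [heq, ← Real.exp_log hψpos]
    exact Real.exp_le_exp.2 (by linarith)
  -- construction of the sequence of levels
  have hstep : ∀ s : ℕ × ℝ × ℝ, ∃ q' : ℕ, 0 < s.2.1 → 0 < s.2.2 →
      (q' ∈ Q ∧ s.1 < q' ∧ ψ q' / (2*q') ≤ s.2.1/4 ∧ 2 ≤ ⌊(q':ℝ) * s.2.1 / 2⌋₊ ∧
       s.2.2 ≤ 8 * ⌊(q':ℝ) * s.2.1 / 2⌋₊ * (ψ q' / (2*q') / 2) ^ r) := by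
    rintro ⟨q₀, ρ, w⟩
    by_cases h : 0 < ρ ∧ 0 < w
    · obtain ⟨q', h1,h2,h3,h4,h5⟩ :=
        exists_good_q ψ Q hψ hQinf r L ε hr0 hr1 hη hlow q₀ ρ w h.1 h.2
      exact ⟨q', fun _ _ => ⟨h1,h2,h3,h4,h5⟩⟩
    · exact ⟨0, fun h1 h2 => absurd ⟨h1,h2⟩ h⟩
  choose nextq hnextq using hstep
  set stepf : ℕ × ℝ × ℝ → ℕ × ℝ × ℝ := fun s =>
    (nextq s, ψ (nextq s) / (2 * nextq s), s.2.2 / ⌊(nextq s : ℝ) * s.2.1 / 2⌋₊) with hstepf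
  set st : ℕ → ℕ × ℝ × ℝ := fun k => stepf^[k] (0, 1/4, 1) with hstdef
  set qq : ℕ → ℕ := fun k => (st k).1 with hqqdef
  set ρ : ℕ → ℝ := fun k => (st k).2.1 with hρdef
  set w : ℕ → ℝ := fun k => (st k).2.2 with hwdef
  set M : ℕ → ℕ := fun k => ⌊(qq k : ℝ) * ρ (k-1) / 2⌋₊ with hMdef
  have hstsucc : ∀ k, st (k+1) = stepf (st k) := fun k => Function.iterate_succ_apply' stepf k _
  have hρ0 : ρ 0 = 1/4 := rfl
  have hw0 : w 0 = 1 := rfl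
  have hqsucc : ∀ k, qq (k+1) = nextq (st k) := by
    intro k; rw [hqqdef]; simp only [hstsucc k, hstepf]
  have hρsucc : ∀ k, ρ (k+1) = ψ (qq (k+1)) / (2 * qq (k+1)) := by
    intro k; rw [hρdef, hqsucc]; simp only [hstsucc k, hstepf]
  have hMsucc : ∀ k, M (k+1) = ⌊(qq (k+1) : ℝ) * ρ k / 2⌋₊ := by
    intro k; rw [hMdef]; simp
  have hwsucc : ∀ k, w (k+1) = w k / (M (k+1) : ℝ) := by
    intro k; rw [hwdef, hMsucc, hqsucc]
    simp only [hstsucc k, hstepf]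
    rfl
  -- positivity invariant
  have hpos : ∀ k, 0 < ρ k ∧ 0 < w k := by
    intro k
    induction k with
    | zero => exact ⟨by rw [hρ0]; norm_num, by rw [hw0]; norm_num⟩
    | succ k ih =>
      obtain ⟨hQ', hgt, hle4, hM2, hw8⟩ := hnextq (st k) ih.1 ih.2
      have hq'pos : 0 < nextq (st k) := (Nat.zero_le _).trans_lt hgt
      have hψpos : 0 < ψ (nextq (st k)) := hψQ _ hQ'
      constructor
      · rw [hρsucc, hqsucc]
        positivity
      · rw [hwsucc, hMsucc, hqsucc]
        have : (0:ℝ) < (⌊(nextq (st k) : ℝ) * ρ k / 2⌋₊ : ℝ) := by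
          exact_mod_cast lt_of_lt_of_le Nat.zero_lt_two hM2
        exact div_pos ih.2 this
  -- facts about each step
  have hfacts : ∀ k, qq (k+1) ∈ Q ∧ qq k < qq (k+1) ∧ ρ (k+1) ≤ ρ k / 4 ∧ 2 ≤ M (k+1) ∧
      w k ≤ 8 * (M (k+1) : ℝ) * (ρ (k+1)/2)^r ∧
      (M (k+1) : ℝ) ≤ (qq (k+1) : ℝ) * ρ k / 2 ∧ (qq (k+1) : ℝ) * ρ k / 4 ≤ (M (k+1) : ℝ) := by
    intro k
    obtain ⟨hQ', hgt, hle4, hM2, hw8⟩ := hnextq (st k) (hpos k).1 (hpos k).2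
    rw [← hqsucc] at hQ' hgt hle4 hM2 hw8
    rw [← hMsucc] at hM2 hw8
    rw [← hρsucc] at hle4 hw8
    have hzr : (0:ℝ) ≤ (qq (k+1) : ℝ) * ρ k / 2 := by
      have := (hpos k).1
      have : (0:ℝ) ≤ (qq (k+1) : ℝ) := Nat.cast_nonneg _
      positivity
    refine ⟨hQ', hgt, hle4, hM2, hw8, ?_, ?_⟩
    · rw [hMsucc]; exact Nat.floor_le hzr
    · rw [hMsucc]
      have h2z : (2:ℝ) ≤ (qq (k+1) : ℝ) * ρ k / 2 := by
        have := Nat.floor_le hzr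
        rw [hMsucc] at hM2
        calc (2:ℝ) ≤ (⌊(qq (k+1) : ℝ) * ρ k / 2⌋₊ : ℝ) := by exact_mod_cast hM2
          _ ≤ _ := Nat.floor_le hzr
      have := Nat.sub_one_lt_floor ((qq (k+1) : ℝ) * ρ k / 2)
      linarith
  clear_value st qq ρ w M
  -- derived facts
  have hqpos : ∀ k, (0:ℝ) < qq (k+1) := by
    intro k
    exact_mod_cast (Nat.zero_le _).trans_lt (hfacts k).2.1
  have hψq' : ∀ k, 0 < ψ (qq (k+1)) := fun k => hψQ _ (hfacts k).1
  have hMpos : ∀ k, (0:ℝ) < (M (k+1) : ℝ) := by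
    intro k
    exact_mod_cast lt_of_lt_of_le Nat.zero_lt_two (hfacts k).2.2.2.1
  have hwM : ∀ k, w k = (M (k+1) : ℝ) * w (k+1) := by
    intro k
    rw [hwsucc k, mul_div_cancel₀ _ (hMpos k).ne']
  have hρ14 : ∀ k, ρ k ≤ (1/4:ℝ)^k := by
    intro k
    induction k with
    | zero => rw [hρ0]; norm_num
    | succ k ih =>
      have h := (hfacts k).2.2.1
      calc ρ (k+1) ≤ ρ k / 4 := h
        _ ≤ (1/4:ℝ)^k / 4 := by linarith
        _ = (1/4:ℝ)^(k+1) := by rw [pow_succ]; ring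
  have hw12 : ∀ k, w k ≤ (1/2:ℝ)^k := by
    intro k
    induction k with
    | zero => rw [hw0]; norm_num
    | succ k ih =>
      have h2 : (2:ℝ) ≤ (M (k+1) : ℝ) := by exact_mod_cast (hfacts k).2.2.2.1
      have := (hpos (k+1)).2
      calc w (k+1) = w k / (M (k+1):ℝ) := hwsucc k
        _ ≤ w k / 2 := by
            apply div_le_div_of_nonneg_left (hpos k).2.le (by norm_num) h2
        _ ≤ (1/2:ℝ)^k / 2 := by linarith
        _ = (1/2:ℝ)^(k+1) := by rw [pow_succ]; ring
  have hw8 : ∀ k, w k ≤ 8 * (ρ k/2)^r := by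
    intro k
    cases k with
    | zero =>
      rw [hw0, hρ0]
      have : ((1:ℝ)/8)^r ≥ (1/8:ℝ) := by
        calc (1/8:ℝ) = (1/8:ℝ)^(1:ℝ) := by rw [Real.rpow_one]
          _ ≤ (1/8:ℝ)^r := Real.rpow_le_rpow_of_exponent_ge (by norm_num) (by norm_num) hr1
      have h14 : (1:ℝ)/4/2 = 1/8 := by norm_num
      rw [h14]
      linarith
    | succ k =>
      have h := (hfacts k).2.2.2.2.1
      rw [hwsucc k, div_le_iff₀ (hMpos k)]
      calc w k ≤ 8 * (M (k+1) : ℝ) * (ρ (k+1)/2)^r := h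
        _ = 8 * (ρ (k+1)/2)^r * (M (k+1):ℝ) := by ring
  have hρlim : Tendsto ρ atTop (nhds 0) :=
    squeeze_zero (fun k => (hpos k).1.le) hρ14
      (tendsto_pow_atTop_nhds_zero_of_lt_one (by norm_num) (by norm_num))
  have hwlim : Tendsto w atTop (nhds 0) :=
    squeeze_zero (fun k => (hpos k).2.le) hw12
      (tendsto_pow_atTop_nhds_zero_of_lt_one (by norm_num) (by norm_num))
  -- geometry of centers
  set c : (ℕ → ℕ) → ℕ → ℝ := centerSeq qq ρ with hcdef
  have hc0 : ∀ a, c a 0 = 1/2 := fun a => by rw [hcdef]; rfl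
  have hcs : ∀ a k, c a (k+1) =
      ((⌈(qq (k+1) : ℝ) * (c a k - ρ k / 2)⌉ : ℝ) + (a k : ℝ)) / (qq (k+1) : ℝ) :=
    fun a k => by rw [hcdef]; rfl
  have hcenter : ∀ a : ℕ → ℕ, (∀ j, a j < M (j+1)) → ∀ k,
      c a k - ρ k / 2 ≤ c a (k+1) ∧ c a (k+1) ≤ c a k := by
    intro a ha k
    have hq' := hqpos k
    have hceil := Int.le_ceil ((qq (k+1) : ℝ) * (c a k - ρ k / 2))
    have hceil2 := Int.ceil_lt_add_one ((qq (k+1) : ℝ) * (c a k - ρ k / 2))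
    have haM : (a k : ℝ) + 1 ≤ (M (k+1) : ℝ) := by exact_mod_cast ha k
    have hMle := (hfacts k).2.2.2.2.2.1
    constructor
    · rw [hcs, le_div_iff₀ hq']
      have : (0:ℝ) ≤ (a k : ℝ) := Nat.cast_nonneg _
      nlinarith
    · rw [hcs, div_le_iff₀ hq']
      nlinarith
  have hcstep : ∀ a : ℕ → ℕ, (∀ j, a j < M (j+1)) → ∀ k,
      |c a (k+1) - c a k| ≤ (fun k => (2/3)*ρ k) k - (fun k => (2/3)*ρ k) (k+1) := by
    intro a ha k
    obtain ⟨h1, h2⟩ := hcenter a ha k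
    have h3 := (hfacts k).2.2.1
    have := (hpos k).1
    rw [abs_le]
    constructor <;> simp only <;> linarith
  set X : (ℕ → ℕ) → ℝ := fun a => limUnder atTop (c a) with hXdef
  have hXdist : ∀ a : ℕ → ℕ, (∀ j, a j < M (j+1)) → ∀ k, |X a - c a k| ≤ (2/3)*ρ k := by
    intro a ha k
    exact (limUnder_spec (fun n => mul_nonneg (by norm_num) (hpos n).1.le)
      (by simpa using hρlim.const_mul (2/3)) (hcstep a ha)).2 k
  have hX01 : ∀ a : ℕ → ℕ, (∀ j, a j < M (j+1)) → X a ∈ Icc (0:ℝ) 1 := by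
    intro a ha
    have h := hXdist a ha 0
    rw [hc0, hρ0] at h
    rw [abs_le] at h
    exact ⟨by linarith [h.1], by linarith [h.2]⟩
  have hnintX : ∀ a : ℕ → ℕ, (∀ j, a j < M (j+1)) → ∀ k,
      nint ((qq (k+1) : ℝ) * X a) < ψ (qq (k+1)) := by
    intro a ha k
    set m : ℤ := ⌈(qq (k+1) : ℝ) * (c a k - ρ k / 2)⌉ + (a k : ℤ) with hm
    have hcm : c a (k+1) = (m:ℝ)/(qq (k+1):ℝ) := by
      rw [hcs, hm]; push_cast; ring
    have hq' := hqpos k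
    calc nint ((qq (k+1) : ℝ) * X a) ≤ |(qq (k+1) : ℝ) * X a - (m:ℝ)| := nint_le _ m
      _ = (qq (k+1):ℝ) * |X a - c a (k+1)| := by
          have he : (qq (k+1):ℝ) * X a - (m:ℝ) = (qq (k+1):ℝ) * (X a - c a (k+1)) := by
            rw [hcm]; field_simp
          rw [he, abs_mul, abs_of_pos hq']
      _ ≤ (qq (k+1):ℝ) * ((2/3)*ρ (k+1)) := by
          have := hXdist a ha (k+1)
          have := hq'.le
          gcongr
      _ = ψ (qq (k+1)) / 3 := by
          rw [hρsucc k]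
          field_simp
      _ < ψ (qq (k+1)) := by linarith [hψq' k]
  -- Part F: membership of constructed points in the fiber
  have hqmono : StrictMono (fun k : ℕ => qq (k+1)) :=
    strictMono_nat_of_lt_succ (fun k => (hfacts (k+1)).2.1)
  have hKfib : ∀ a : ℕ → ℕ, (∀ j, a j < M (j+1)) →
      X a ∈ {x₂ : ℝ | x₂ ∈ Icc (0:ℝ) 1 ∧ ![x₁, x₂] ∈ ExactSet 2 ψ} := by
    intro a ha
    refine ⟨hX01 a ha, ⟨⟨?_, ?_⟩, ?_⟩⟩
    · intro i
      fin_cases i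
      · simpa using hx₁Icc
      · simpa using hX01 a ha
    · apply Set.infinite_of_injective_forall_mem (f := fun k : ℕ => qq (k+1)) hqmono.injective
      intro k
      intro i
      fin_cases i
      · have hQk : nint ((qq (k+1) : ℝ) * x₁) < ψ (qq (k+1)) := (hfacts k).1
        simpa using hQk
      · simpa using hnintX a ha k
    · intro hmem
      rw [mem_iUnion₂] at hmem
      obtain ⟨cc, hcc, hW⟩ := hmem
      apply hx₁E
      rw [mem_iUnion₂]
      refine ⟨cc, hcc, ?_, ?_⟩
      · intro i
        fin_cases i
        simpa using hx₁Icc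
      · apply hW.2.mono
        intro q hq
        simpa using hq 0
  -- Part G: partial sums, separation, and the Hölder estimate
  set S : (ℕ → ℕ) → ℕ → ℝ := fun a k => ∑ j ∈ Finset.range k, (a j : ℝ) * w (j+1) with hSdef
  set G : (ℕ → ℕ) → ℝ := fun a => limUnder atTop (S a) with hGdef
  have hSstep : ∀ a : ℕ → ℕ, (∀ j, a j < M (j+1)) → ∀ k,
      |S a (k+1) - S a k| ≤ w k - w (k+1) := by
    intro a ha k
    have he : S a (k+1) - S a k = (a k:ℝ) * w (k+1) := by
      rw [hSdef]; simp [Finset.sum_range_succ]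
    have haM : (a k : ℝ) + 1 ≤ (M (k+1) : ℝ) := by exact_mod_cast ha k
    have hwp := (hpos (k+1)).2
    rw [he, abs_of_nonneg (by positivity)]
    have hMw := hwM k
    nlinarith
  have hGdist : ∀ a : ℕ → ℕ, (∀ j, a j < M (j+1)) → ∀ k, |G a - S a k| ≤ w k := by
    intro a ha k
    exact (limUnder_spec (fun n => (hpos n).2.le) hwlim (hSstep a ha)).2 k
  have hGtend : ∀ a : ℕ → ℕ, (∀ j, a j < M (j+1)) → Tendsto (S a) atTop (nhds (G a)) := by
    intro a ha
    exact (limUnder_spec (fun n => (hpos n).2.le) hwlim (hSstep a ha)).1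
  have hsep : ∀ a b : ℕ → ℕ, (∀ j, a j < M (j+1)) → (∀ j, b j < M (j+1)) → ∀ k,
      (∀ j, j < k → a j = b j) → a k ≠ b k →
      |(a k:ℝ) - (b k:ℝ)| / (3 * qq (k+1)) ≤ |X a - X b| ∧
      |G a - G b| ≤ 144 * (|(a k:ℝ) - (b k:ℝ)| / (3 * qq (k+1)))^r := by
    intro a b ha hb k hpre hne
    set Qr : ℝ := (qq (k+1) : ℝ) with hQr
    have hq' : (0:ℝ) < Qr := hqpos k
    set d : ℝ := |(a k:ℝ) - (b k:ℝ)| with hd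
    have hd1 : (1:ℝ) ≤ d := by
      have h1 : a k ≠ b k := hne
      have h2 : (1:ℤ) ≤ |(a k : ℤ) - (b k : ℤ)| := by
        apply Int.one_le_abs
        simpa [sub_eq_zero] using (fun h => h1 (by exact_mod_cast h))
      rw [hd]
      calc (1:ℝ) ≤ |((a k : ℤ) : ℝ) - ((b k : ℤ) : ℝ)| := by
            rw [← Int.cast_sub, ← Int.cast_abs]; exact_mod_cast h2
        _ = |(a k:ℝ) - (b k:ℝ)| := by push_cast; ring_nf
    have hceq : c a k = c b k := by
      have hkey : ∀ j, j ≤ k → c a j = c b j := by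
        intro j hj
        induction j with
        | zero => rw [hc0, hc0]
        | succ j ih =>
          rw [hcs, hcs, ih (by omega), hpre j (by omega)]
      exact hkey k le_rfl
    have hdiffc : c a (k+1) - c b (k+1) = ((a k:ℝ) - (b k:ℝ)) / Qr := by
      rw [hcs, hcs, hceq]
      ring
    have habs : |c a (k+1) - c b (k+1)| = d / Qr := by
      rw [hdiffc, abs_div, abs_of_pos hq', hd]
    have hρb : ρ (k+1) ≤ 1/(4 * Qr) := by
      rw [hρsucc k]
      have h2 := (hψ (qq (k+1))).2
      have h1 := (hψ (qq (k+1))).1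
      rw [div_le_div_iff₀ (by positivity) (by positivity)]
      nlinarith
    have h1X := hXdist a ha (k+1)
    have h2X := hXdist b hb (k+1)
    have htri : |c a (k+1) - c b (k+1)| ≤
        |X a - c a (k+1)| + |X a - X b| + |X b - c b (k+1)| := by
      calc |c a (k+1) - c b (k+1)|
          = |(X a - c a (k+1)) * (-1) + (X a - X b) + (X b - c b (k+1))| := by ring_nf
        _ ≤ |(X a - c a (k+1)) * (-1) + (X a - X b)| + |X b - c b (k+1)| := abs_add_le _ _
        _ ≤ |(X a - c a (k+1)) * (-1)| + |X a - X b| + |X b - c b (k+1)| := by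
            gcongr; exact abs_add_le _ _
        _ = |X a - c a (k+1)| + |X a - X b| + |X b - c b (k+1)| := by
            rw [abs_mul, abs_neg, abs_one, mul_one]
    have hkeydiv : d/(3*Qr) + 1/(3*Qr) + 1/(3*Qr) ≤ d / Qr := by
      rw [← add_div, ← add_div, div_le_div_iff₀ (by positivity) hq']
      nlinarith
    have hsep1 : d / (3 * Qr) ≤ |X a - X b| := by
      have hρ' : (2/3) * ρ (k+1) ≤ 1/(6*Qr) := by
        have h := hρb
        rw [le_div_iff₀ (by positivity : (0:ℝ) < 6*Qr)]
        rw [le_div_iff₀ (by positivity : (0:ℝ) < 4*Qr)] at h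
        nlinarith
      rw [habs] at htri
      have h16 : (1:ℝ)/(6*Qr) ≤ 1/(3*Qr) := by
        rw [div_le_div_iff₀ (by positivity) (by positivity)]; nlinarith
      linarith
    refine ⟨hsep1, ?_⟩
    -- the G-side estimate
    have hSdiff : S a (k+1) - S b (k+1) = ((a k:ℝ) - (b k:ℝ)) * w (k+1) := by
      rw [hSdef]
      simp only
      rw [Finset.sum_range_succ, Finset.sum_range_succ]
      have hsum : ∑ j ∈ Finset.range k, (a j:ℝ) * w (j+1)
          = ∑ j ∈ Finset.range k, (b j:ℝ) * w (j+1) :=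
        Finset.sum_congr rfl (fun j hj => by rw [hpre j (Finset.mem_range.1 hj)])
      rw [hsum]; ring
    have hGa := hGdist a ha (k+1)
    have hGb := hGdist b hb (k+1)
    have hwp := (hpos (k+1)).2
    have hGG : |G a - G b| ≤ 3 * d * w (k+1) := by
      have htri2 : |G a - G b| ≤
          |G a - S a (k+1)| + |S a (k+1) - S b (k+1)| + |S b (k+1) - G b| := by
        calc |G a - G b|
            = |(G a - S a (k+1)) + (S a (k+1) - S b (k+1)) + (S b (k+1) - G b)| := by ring_nf
          _ ≤ |(G a - S a (k+1)) + (S a (k+1) - S b (k+1))| + |S b (k+1) - G b| := abs_add_le _ _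
          _ ≤ |G a - S a (k+1)| + |S a (k+1) - S b (k+1)| + |S b (k+1) - G b| := by
              gcongr; exact abs_add_le _ _
      have habs2 : |S a (k+1) - S b (k+1)| = d * w (k+1) := by
        rw [hSdiff, abs_mul, abs_of_pos hwp, hd]
      have h3 : |S b (k+1) - G b| = |G b - S b (k+1)| := abs_sub_comm _ _
      rw [habs2, h3] at htri2
      nlinarith
    -- numeric rpow chain
    set M' : ℝ := (M (k+1) : ℝ) with hM'
    have hM'pos : 0 < M' := hMpos k
    have hdM : d ≤ M' := by
      have h1 : (a k : ℝ) + 1 ≤ M' := by rw [hM']; exact_mod_cast ha k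
      have h2 : (b k : ℝ) + 1 ≤ M' := by rw [hM']; exact_mod_cast hb k
      have h3 : (0:ℝ) ≤ (a k : ℝ) := Nat.cast_nonneg _
      have h4 : (0:ℝ) ≤ (b k : ℝ) := Nat.cast_nonneg _
      rw [hd, abs_le]
      constructor <;> nlinarith
    have hdpos : 0 < d := lt_of_lt_of_le one_pos hd1
    have hMge := (hfacts k).2.2.2.2.2.2
    have hbase2 : ρ k / 2 ≤ 6 * (M'/d) * (d/(3*Qr)) := by
      have he : 6 * (M'/d) * (d/(3*Qr)) = 2 * M' / Qr := by
        field_simp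
        ring
      rw [he]
      rw [div_le_div_iff₀ (by norm_num) (by positivity)]
      nlinarith [(hpos k).1]
    have hchain : 3 * d * w (k+1) ≤ 144 * (d/(3*Qr))^r := by
      have hb1 : (0:ℝ) ≤ ρ k / 2 := by linarith [(hpos k).1]
      have hb2 : (0:ℝ) ≤ d/(3*Qr) := by positivity
      have hb3 : (1:ℝ) ≤ 6 * (M'/d) := by
        have h := (one_le_div hdpos).2 hdM
        linarith
      calc 3 * d * w (k+1) = 3 * d * (w k / M') := by rw [hwsucc k]
        _ ≤ 3 * d * ((8 * (ρ k/2)^r) / M') := by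
            have := hw8 k
            gcongr
        _ = 24 * (d/M') * (ρ k/2)^r := by ring
        _ ≤ 24 * (d/M') * ((6 * (M'/d) * (d/(3*Qr)))^r) := by
            gcongr
        _ = 24 * (d/M') * ((6 * (M'/d))^r * (d/(3*Qr))^r) := by
            rw [Real.mul_rpow (by positivity) hb2]
        _ ≤ 24 * (d/M') * ((6 * (M'/d)) * (d/(3*Qr))^r) := by
            gcongr
            calc (6 * (M'/d))^r ≤ (6 * (M'/d))^(1:ℝ) :=
                  Real.rpow_le_rpow_of_exponent_le hb3 hr1
              _ = 6 * (M'/d) := Real.rpow_one _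
        _ = 144 * ((d/M') * (M'/d)) * (d/(3*Qr))^r := by ring
        _ = 144 * (d/(3*Qr))^r := by
            rw [div_mul_div_comm, mul_comm d M', div_self (by positivity)]
            ring
    exact hGG.trans hchain
  -- Part H: injectivity, Hölder map, surjectivity, conclusion
  classical
  have hXinj : ∀ a b : ℕ → ℕ, (∀ j, a j < M (j+1)) → (∀ j, b j < M (j+1)) →
      X a = X b → a = b := by
    intro a b ha hb hXeq
    by_contra hne
    have hex : ∃ k, a k ≠ b k := Function.ne_iff.1 hne
    set k := Nat.find hex with hk
    have hkspec : a k ≠ b k := Nat.find_spec hex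
    have hpre : ∀ j, j < k → a j = b j := fun j hj => not_not.1 (Nat.find_min hex hj)
    have hs := (hsep a b ha hb k hpre hkspec).1
    rw [hXeq, sub_self, abs_zero] at hs
    have hd1 : (1:ℝ) ≤ |(a k:ℝ) - (b k:ℝ)| := by
      have h2 : (1:ℤ) ≤ |(a k : ℤ) - (b k : ℤ)| := by
        apply Int.one_le_abs
        simpa [sub_eq_zero] using (fun h => hkspec (by exact_mod_cast h))
      calc (1:ℝ) ≤ |((a k : ℤ) : ℝ) - ((b k : ℤ) : ℝ)| := by
            rw [← Int.cast_sub, ← Int.cast_abs]; exact_mod_cast h2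
        _ = |(a k:ℝ) - (b k:ℝ)| := by push_cast; ring_nf
    have hq' := hqpos k
    have : (0:ℝ) < |(a k:ℝ) - (b k:ℝ)| / (3 * (qq (k+1):ℝ)) := by positivity
    linarith
  set f : ℝ → ℝ := fun t =>
    if h : ∃ a : ℕ → ℕ, (∀ j, a j < M (j+1)) ∧ X a = t then G h.choose else 0 with hfdef
  have hfX : ∀ a : ℕ → ℕ, (∀ j, a j < M (j+1)) → f (X a) = G a := by
    intro a ha
    have hex : ∃ b : ℕ → ℕ, (∀ j, b j < M (j+1)) ∧ X b = X a := ⟨a, ha, rfl⟩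
    rw [hfdef]
    simp only [dif_pos hex]
    obtain ⟨hb, hXb⟩ := hex.choose_spec
    rw [hXinj _ _ hb ha hXb]
  set K : Set ℝ := X '' {a : ℕ → ℕ | ∀ j, a j < M (j+1)} with hKdef
  have hholder : HolderOnWith 144 r' f K := by
    rintro x ⟨a, ha, rfl⟩ y ⟨b, hb, rfl⟩
    rcases eq_or_ne a b with rfl | hne
    · simp only [edist_self]
      exact zero_le
    · have hex : ∃ k, a k ≠ b k := Function.ne_iff.1 hne
      set k := Nat.find hex with hk
      have hkspec : a k ≠ b k := Nat.find_spec hex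
      have hpre : ∀ j, j < k → a j = b j := fun j hj => not_not.1 (Nat.find_min hex hj)
      obtain ⟨hs1, hs2⟩ := hsep a b ha hb k hpre hkspec
      have hreal : dist (f (X a)) (f (X b)) ≤ 144 * dist (X a) (X b) ^ r := by
        rw [hfX a ha, hfX b hb, Real.dist_eq, Real.dist_eq]
        calc |G a - G b| ≤ 144 * (|(a k:ℝ) - (b k:ℝ)| / (3 * (qq (k+1):ℝ)))^r := hs2
          _ ≤ 144 * |X a - X b|^r := by
              gcongr
      rw [edist_dist, edist_dist]
      calc ENNReal.ofReal (dist (f (X a)) (f (X b)))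
          ≤ ENNReal.ofReal (144 * dist (X a) (X b) ^ r) := ENNReal.ofReal_le_ofReal hreal
        _ = ENNReal.ofReal 144 * ENNReal.ofReal (dist (X a) (X b)) ^ (r':ℝ) := by
            rw [ENNReal.ofReal_mul (by norm_num), ENNReal.ofReal_rpow_of_nonneg dist_nonneg hr0.le]
        _ = (144 : ℝ≥0) * ENNReal.ofReal (dist (X a) (X b)) ^ (r':ℝ) := by
            norm_num
  have himg : Ioo (0:ℝ) 1 ⊆ f '' K := by
    intro y hy
    obtain ⟨a, hadm, hS⟩ := digits_exist M w y
      (fun k => le_trans one_le_two (hfacts k).2.2.2.1) hw0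
      (fun k => (hwM k).symm) ⟨hy.1.le, hy.2⟩
    have htendS := hGtend a hadm
    have htendy : Tendsto (S a) atTop (nhds y) := by
      have hz : Tendsto (fun k => |S a k - y|) atTop (nhds 0) :=
        squeeze_zero (fun k => abs_nonneg _)
          (fun k => by rw [abs_sub_comm]; exact hS k) hwlim
      rw [tendsto_iff_dist_tendsto_zero]
      simpa [Real.dist_eq] using hz
    have hGa : G a = y := tendsto_nhds_unique htendS htendy
    exact ⟨X a, ⟨a, hadm, rfl⟩, by rw [hfX a hadm, hGa]⟩
  have hdim1 : dimH (Ioo (0:ℝ) 1) = 1 := by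
    rw [Real.dimH_of_mem_nhds (x := (1/2:ℝ)) (isOpen_Ioo.mem_nhds (by norm_num))]
    simp
  have hr'pos : (0:ℝ≥0) < r' := pos_iff_ne_zero.2 hr'0
  have h2 : (1:ℝ≥0∞) ≤ dimH K / r' := by
    calc (1:ℝ≥0∞) = dimH (Ioo (0:ℝ) 1) := hdim1.symm
      _ ≤ dimH (f '' K) := dimH_mono himg
      _ ≤ dimH K / r' := hholder.dimH_image_le hr'pos
  have h3 : (r' : ℝ≥0∞) ≤ dimH K := by
    rw [ENNReal.le_div_iff_mul_le (Or.inl (by exact_mod_cast hr'0)) (Or.inl ENNReal.coe_ne_top),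
      one_mul] at h2
    exact h2
  calc (r' : ℝ≥0∞) ≤ dimH K := h3
    _ ≤ dimH {x₂ : ℝ | x₂ ∈ Icc (0:ℝ) 1 ∧ ![x₁, x₂] ∈ ExactSet 2 ψ} := by
        apply dimH_mono
        rintro t ⟨a, ha, rfl⟩
        exact hKfib a ha
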